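/- Let K be a compact, perfectly normal topological space and X a real Banach space. A function f ∈ C(K,X) with ‖f‖ = 1 is a (ρ₊)-left symmetric point of C(K,X) if and only if both of the following hold: (i) there exists k₀ ∈ K such that ‖f(k₀)‖ = 1 and f(k) = 0 for all k ∈ K with k ≠ k₀, and (ii) f(k₀) is a (ρ₊)-left symmetric point of X. -/

import Mathlib

open Filter Topology Set Metric NormedSpace

noncomputable section

/-- Birkhoff–James orthogonality: `x ⊥_B y` iff `‖x + t • y‖ ≥ ‖x‖` for all real `t`. -/
def BJOrth {E : Type*} [NormedAddCommGroup E] [NormedSpace ℝ E] (x y : E) : Prop :=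
  ∀ t : ℝ, ‖x‖ ≤ ‖x + t • y‖

/-- The norm derivative `ρ'₊(x,y) = ‖x‖ · lim_{t→0⁺} (‖x+ty‖-‖x‖)/t`. -/
def rhoPlus {E : Type*} [NormedAddCommGroup E] [NormedSpace ℝ E] (x y : E) : ℝ :=
  ‖x‖ * limUnder (𝓝[>] (0 : ℝ)) (fun t => (‖x + t • y‖ - ‖x‖) / t)

/-- The norm derivative `ρ'₋(x,y) = ‖x‖ · lim_{t→0⁻} (‖x+ty‖-‖x‖)/t`. -/
def rhoMinus {E : Type*} [NormedAddCommGroup E] [NormedSpace ℝ E] (x y : E) : ℝ :=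
  ‖x‖ * limUnder (𝓝[<] (0 : ℝ)) (fun t => (‖x + t • y‖ - ‖x‖) / t)

/-- The norm derivative `ρ'(x,y) = (ρ'₊(x,y) + ρ'₋(x,y))/2`. -/
def rhoDer {E : Type*} [NormedAddCommGroup E] [NormedSpace ℝ E] (x y : E) : ℝ :=
  (rhoPlus x y + rhoMinus x y) / 2

/-- `x` is an exposed point of the closed unit ball of `E`: there is a norm-one functional `f`
with `f x = 1` and `f u < 1` for every `u` in the ball with `u ≠ x`. -/
def ExposedPt {E : Type*} [NormedAddCommGroup E] [NormedSpace ℝ E] (x : E) : Prop :=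
  ‖x‖ ≤ 1 ∧ ∃ f : E →L[ℝ] ℝ, ‖f‖ = 1 ∧ f x = 1 ∧ ∀ u : E, ‖u‖ ≤ 1 → u ≠ x → f u < 1

namespace RP
variable {E : Type*} [NormedAddCommGroup E] [NormedSpace ℝ E]

def Q (x y : E) (t : ℝ) : ℝ := (‖x + t • y‖ - ‖x‖) / t

lemma neg_le_Q (x y : E) {t : ℝ} (ht : 0 < t) : -‖y‖ ≤ Q x y t := by
  rw [Q, le_div_iff₀ ht]
  have h := norm_sub_norm_le x (x + t • y)
  simp only [sub_add_cancel_left, norm_neg, norm_smul, Real.norm_eq_abs, abs_of_pos ht] at h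
  linarith

lemma Q_le (x y : E) {t : ℝ} (ht : 0 < t) : Q x y t ≤ ‖y‖ := by
  rw [Q, div_le_iff₀ ht]
  have h := norm_add_le x (t • y)
  simp only [norm_smul, Real.norm_eq_abs, abs_of_pos ht] at h
  linarith

lemma convexQ (x y : E) : ConvexOn ℝ univ (fun t : ℝ => ‖x + t • y‖) := by
  have h : (fun t : ℝ => ‖x + t • y‖) = (fun z : E => ‖z‖) ∘ (AffineMap.lineMap x (x + y)) := by
    funext t
    simp [AffineMap.lineMap_apply, add_comm]
  rw [h]
  have := (convexOn_norm (convex_univ (E := E))).comp_affineMap (AffineMap.lineMap x (x + y))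
  simpa using this

lemma Q_monoOn (x y : E) : MonotoneOn (Q x y) (Ioi 0) := by
  intro s hs t ht hst
  have h := (convexQ x y).secant_mono (a := (0:ℝ)) (x := s) (y := t) trivial trivial trivial
    (ne_of_gt hs) (ne_of_gt ht) hst
  simpa [Q] using h

def ri (x y : E) : ℝ := sInf (Q x y '' Ioi 0)

lemma bddBelow_Q (x y : E) : BddBelow (Q x y '' Ioi 0) := by
  refine ⟨-‖y‖, ?_⟩
  rintro _ ⟨t, ht, rfl⟩
  exact neg_le_Q x y ht

lemma tendsto_Q (x y : E) : Tendsto (Q x y) (𝓝[>] (0:ℝ)) (𝓝 (ri x y)) :=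
  (Q_monoOn x y).tendsto_nhdsGT (bddBelow_Q x y)

lemma rhoPlus_eq (x y : E) : rhoPlus x y = ‖x‖ * ri x y := by
  rw [rhoPlus, show (fun t : ℝ => (‖x + t • y‖ - ‖x‖) / t) = Q x y from rfl,
    (tendsto_Q x y).limUnder_eq]

lemma ri_le_Q (x y : E) {t : ℝ} (ht : 0 < t) : ri x y ≤ Q x y t :=
  csInf_le (bddBelow_Q x y) ⟨t, ht, rfl⟩

lemma neg_le_ri (x y : E) : -‖y‖ ≤ ri x y :=
  le_csInf ⟨Q x y 1, 1, mem_Ioi.2 one_pos, rfl⟩ (by rintro _ ⟨t, ht, rfl⟩; exact neg_le_Q x y ht)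

lemma ri_le (x y : E) : ri x y ≤ ‖y‖ := (ri_le_Q x y one_pos).trans (Q_le x y one_pos)

lemma abs_rhoPlus_le (x y : E) : |rhoPlus x y| ≤ ‖x‖ * ‖y‖ := by
  rw [rhoPlus_eq, abs_mul, abs_of_nonneg (norm_nonneg x)]
  exact mul_le_mul_of_nonneg_left (abs_le.2 ⟨neg_le_ri x y, ri_le x y⟩) (norm_nonneg x)

lemma rhoPlus_zero_left (y : E) : rhoPlus 0 y = 0 := by
  simp [rhoPlus]

lemma rhoPlus_zero_left' {x : E} (hx : ‖x‖ = 0) (y : E) : rhoPlus x y = 0 := by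
  rw [rhoPlus, hx, zero_mul]

lemma rhoPlus_zero_right (x : E) : rhoPlus x 0 = 0 := by
  have : ri x 0 = 0 := le_antisymm ((ri_le x 0).trans (by simp)) (by simpa using neg_le_ri x 0)
  rw [rhoPlus_eq, this, mul_zero]

lemma Q_smul_self (x : E) (c : ℝ) {t : ℝ} (ht : 0 < t) :
    Q x (c • x) t = (|1 + t * c| - 1) * ‖x‖ / t := by
  rw [Q]
  have h1 : x + t • c • x = (1 + t * c) • x := by
    rw [add_smul, one_smul, smul_smul]
  rw [h1, norm_smul, Real.norm_eq_abs]
  ring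

lemma ri_smul_self (x : E) (c : ℝ) : ri x (c • x) = c * ‖x‖ := by
  have hge : ∀ t : ℝ, 0 < t → c * ‖x‖ ≤ Q x (c • x) t := by
    intro t ht
    rw [Q_smul_self x c ht, le_div_iff₀ ht]
    have : 1 + t * c ≤ |1 + t * c| := le_abs_self _
    nlinarith [norm_nonneg x]
  set t₀ : ℝ := 1 / (1 + |c|) with ht₀def
  have ht₀ : 0 < t₀ := by positivity
  have hQt₀ : Q x (c • x) t₀ = c * ‖x‖ := by
    have habs : |t₀ * c| ≤ 1 := by
      rw [abs_mul, abs_of_pos ht₀, ht₀def]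
      rw [div_mul_eq_mul_div, one_mul, div_le_one (by positivity)]
      linarith [abs_nonneg c]
    have hpos : 0 ≤ 1 + t₀ * c := by
      have := (abs_le.1 habs).1
      linarith
    rw [Q_smul_self x c ht₀, abs_of_nonneg hpos]
    field_simp
    ring
  refine le_antisymm ?_ ?_
  · rw [← hQt₀]
    exact ri_le_Q x (c • x) ht₀
  · exact le_csInf ⟨Q x (c • x) 1, 1, mem_Ioi.2 one_pos, rfl⟩
      (by rintro _ ⟨t, ht, rfl⟩; exact hge t ht)

lemma rhoPlus_smul_self (x : E) (c : ℝ) : rhoPlus x (c • x) = c * (‖x‖ * ‖x‖) := by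
  rw [rhoPlus_eq, ri_smul_self]; ring

lemma rhoPlus_self (x : E) : rhoPlus x x = ‖x‖ * ‖x‖ := by
  have := rhoPlus_smul_self x 1
  simpa using this

lemma rhoPlus_neg_self (x : E) : rhoPlus (-x) x = -(‖x‖ * ‖x‖) := by
  have hfun : (fun t : ℝ => (‖-x + t • x‖ - ‖-x‖) / t)
      = (fun t : ℝ => (‖x + t • (-x)‖ - ‖x‖) / t) := by
    funext t
    have h1 : -x + t • x = -(x + t • (-x)) := by
      rw [smul_neg]
      abel
    rw [h1, norm_neg, norm_neg]
  have h2 : rhoPlus (-x) x = rhoPlus x (-x) := by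
    rw [rhoPlus, rhoPlus, hfun, norm_neg]
  rw [h2, show -x = (-1 : ℝ) • x by simp, rhoPlus_smul_self]
  ring

lemma ri_smul_left (x y : E) {c : ℝ} (hc : 0 < c) : ri (c • x) y = ri x y := by
  have hQ : ∀ t : ℝ, 0 < t → Q (c • x) y t = Q x y (t / c) := by
    intro t ht
    rw [Q, Q]
    have h1 : c • x + t • y = c • (x + (t / c) • y) := by
      rw [smul_add, smul_smul, mul_div_cancel₀ _ (ne_of_gt hc)]
    rw [h1]
    simp only [norm_smul, Real.norm_eq_abs, abs_of_pos hc]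
    rw [div_eq_div_iff (ne_of_gt ht) (ne_of_gt (div_pos ht hc))]
    field_simp
  have himg : Q (c • x) y '' Ioi 0 = Q x y '' Ioi 0 := by
    ext v
    constructor
    · rintro ⟨t, ht, rfl⟩
      exact ⟨t / c, div_pos ht hc, (hQ t ht).symm⟩
    · rintro ⟨t, ht, rfl⟩
      refine ⟨t * c, mul_pos ht hc, ?_⟩
      rw [hQ _ (mul_pos ht hc), mul_div_cancel_right₀ _ (ne_of_gt hc)]
  rw [ri, ri, himg]

lemma rhoPlus_smul_left (x y : E) {c : ℝ} (hc : 0 < c) :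
    rhoPlus (c • x) y = c * rhoPlus x y := by
  rw [rhoPlus_eq, rhoPlus_eq, ri_smul_left x y hc, norm_smul, Real.norm_eq_abs,
    abs_of_pos hc]
  ring

end RP

section Master
variable {K X : Type*} [TopologicalSpace K] [CompactSpace K]
  [NormedAddCommGroup X] [NormedSpace ℝ X]

omit [NormedSpace ℝ X] in
lemma exists_norm_attain [Nonempty K] (f : C(K, X)) : ∃ k : K, ‖f k‖ = ‖f‖ := by
  obtain ⟨k, -, hk⟩ := isCompact_univ.exists_isMaxOn univ_nonempty
    f.continuous.norm.continuousOn
  refine ⟨k, le_antisymm (f.norm_coe_le_norm k) ?_⟩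
  exact (f.norm_le (norm_nonneg _)).2 fun k' => hk (Set.mem_univ k')

omit [NormedSpace ℝ X] in
lemma nonempty_of_norm_pos (f : C(K,X)) (hf : 0 < ‖f‖) : Nonempty K := by
  by_contra h
  rw [not_nonempty_iff] at h
  have : f = 0 := by ext k; exact (h.false k).elim
  rw [this] at hf; simp at hf

theorem master (f g : C(K, X)) (hf : 0 < ‖f‖) :
    rhoPlus f g = sSup ((fun k => rhoPlus (f k) (g k)) '' {k | ‖f k‖ = ‖f‖}) := by
  have hK : Nonempty K := nonempty_of_norm_pos f hf
  set r := ‖f‖ with hr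
  set M : Set K := {k | ‖f k‖ = r} with hM
  set S : Set ℝ := (fun k => rhoPlus (f k) (g k)) '' M with hS
  obtain ⟨kst, hkst⟩ := exists_norm_attain f
  have hMne : M.Nonempty := ⟨kst, hkst⟩
  have hSne : S.Nonempty := hMne.image _
  have hSbdd : BddAbove S := by
    refine ⟨r * ‖g‖, ?_⟩
    rintro _ ⟨k, hk, rfl⟩
    calc rhoPlus (f k) (g k) ≤ |rhoPlus (f k) (g k)| := le_abs_self _
      _ ≤ ‖f k‖ * ‖g k‖ := RP.abs_rhoPlus_le _ _
      _ ≤ r * ‖g‖ := by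
          apply mul_le_mul (f.norm_coe_le_norm k) (g.norm_coe_le_norm k) (norm_nonneg _)
          exact le_of_lt hf
  set m : ℝ := sSup S with hm
  have happ : ∀ (t : ℝ) (k : K), (f + t • g) k = f k + t • g k := by intro t k; simp
  have hlow : ∀ t : ℝ, 0 < t → m / r ≤ RP.Q f g t := by
    intro t ht
    rw [div_le_iff₀ hf]
    apply csSup_le hSne
    rintro _ ⟨k, (hk : ‖f k‖ = r), rfl⟩
    have h1 : rhoPlus (f k) (g k) = r * RP.ri (f k) (g k) := by
      rw [RP.rhoPlus_eq, hk]
    have h2 : RP.ri (f k) (g k) ≤ RP.Q (f k) (g k) t := RP.ri_le_Q _ _ ht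
    have h3 : RP.Q (f k) (g k) t ≤ RP.Q f g t := by
      rw [RP.Q, RP.Q, hk, ← hr]
      have : ‖f k + t • g k‖ ≤ ‖f + t • g‖ := by
        rw [← happ t k]; exact ContinuousMap.norm_coe_le_norm _ k
      gcongr
    calc rhoPlus (f k) (g k) = r * RP.ri (f k) (g k) := h1
      _ ≤ r * RP.Q f g t := by
          apply mul_le_mul_of_nonneg_left (h2.trans h3) (le_of_lt hf)
      _ = RP.Q f g t * r := mul_comm _ _
  have hup : ∀ ε : ℝ, 0 < ε → ∀ᶠ t in 𝓝[>] (0:ℝ), RP.Q f g t ≤ m / r + ε := by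
    intro ε hε
    have hchoice : ∀ k ∈ M, ∃ tk : ℝ, 0 < tk ∧
        RP.Q (f k) (g k) tk < m / r + ε / 2 := by
      intro k hk
      have h0 : rhoPlus (f k) (g k) ≤ m := le_csSup hSbdd ⟨k, hk, rfl⟩
      have hk' : ‖f k‖ = r := hk
      have h1 : RP.ri (f k) (g k) < m / r + ε / 2 := by
        have h2 : rhoPlus (f k) (g k) = r * RP.ri (f k) (g k) := by
          rw [RP.rhoPlus_eq, hk']
        rw [h2] at h0
        rw [div_add' _ _ _ (ne_of_gt hf), lt_div_iff₀ hf]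
        nlinarith
      have h2 : sInf (RP.Q (f k) (g k) '' Set.Ioi 0) < m / r + ε / 2 := h1
      obtain ⟨_, ⟨tk, htk, rfl⟩, hlt⟩ :=
        exists_lt_of_csInf_lt (Set.Nonempty.image _ ⟨1, Set.mem_Ioi.2 one_pos⟩) h2
      exact ⟨tk, htk, hlt⟩
    choose! tk htk0 htkQ using hchoice
    set U : K → Set K := fun k =>
      {k' | (‖f k' + tk k • g k'‖ - ‖f k'‖) / tk k < m / r + ε / 2} with hU
    have hUopen : ∀ k ∈ M, IsOpen (U k) := by
      intro k _
      apply isOpen_lt _ continuous_const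
      exact ((f.continuous.add (g.continuous.const_smul (tk k))).norm.sub
        f.continuous.norm).div_const _
    have hMU : M ⊆ ⋃ k ∈ M, U k := by
      intro k hk
      exact Set.mem_biUnion hk (htkQ k hk)
    have hMcl : IsClosed M := isClosed_eq f.continuous.norm continuous_const
    obtain ⟨b, hbM, hbfin, hcov⟩ :=
      hMcl.isCompact.elim_finite_subcover_image hUopen hMU
    have hbne : b.Nonempty := by
      obtain ⟨k, hk⟩ := hMne
      have := hcov hk
      simp only [Set.mem_iUnion] at this
      obtain ⟨i, hi, -⟩ := this
      exact ⟨i, hi⟩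
    obtain ⟨kmin, hkminb, hkmin⟩ := Set.exists_min_image b tk hbfin hbne
    set t₁ : ℝ := tk kmin with ht₁def
    have ht₁ : 0 < t₁ := htk0 kmin (hbM hkminb)
    set V : Set K := ⋃ k ∈ b, U k with hV
    have hVopen : IsOpen V := isOpen_biUnion fun k hk => hUopen k (hbM hk)
    have hδ : ∃ δ : ℝ, 0 < δ ∧ ∀ k', k' ∉ V → ‖f k'‖ ≤ r - δ := by
      rcases Set.eq_empty_or_nonempty Vᶜ with hC | hC
      · refine ⟨r, hf, fun k' hk' => absurd (hC ▸ hk' : k' ∈ (∅:Set K)) (Set.notMem_empty k')⟩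
      · obtain ⟨kmax, hkmaxC, hkmax⟩ := hVopen.isClosed_compl.isCompact.exists_isMaxOn hC
          f.continuous.norm.continuousOn
        refine ⟨r - ‖f kmax‖, ?_, fun k' hk' => ?_⟩
        · have h1 : ‖f kmax‖ ≤ r := f.norm_coe_le_norm kmax
          have h2 : ‖f kmax‖ ≠ r := by
            intro h
            exact hkmaxC (hcov h)
          cases lt_or_eq_of_le h1 with
          | inl h => linarith
          | inr h => exact absurd h h2
        · have h5 : ‖f k'‖ ≤ ‖f kmax‖ := hkmax (hk' : k' ∈ Vᶜ)
          linarith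
    obtain ⟨δ, hδ0, hδle⟩ := hδ
    set B : ℝ := ‖g‖ - (m / r + ε) with hB
    set t₂ : ℝ := δ / (|B| + 1) with ht₂def
    have ht₂ : 0 < t₂ := by positivity
    clear_value t₂
    clear_value B
    have hkey : ∀ t ∈ Set.Ioc (0:ℝ) (min t₁ t₂), RP.Q f g t ≤ m / r + ε := by
      rintro t ⟨ht0, htle⟩
      have ht1 : t ≤ t₁ := le_trans htle (min_le_left _ _)
      have ht2 : t ≤ t₂ := le_trans htle (min_le_right _ _)
      have hpoint : ∀ k' : K, ‖f k' + t • g k'‖ ≤ r + t * (m / r + ε) := by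
        intro k'
        by_cases hk' : k' ∈ V
        · simp only [hV, Set.mem_iUnion] at hk'
          obtain ⟨k, hkb, hkU⟩ := hk'
          have htkk : t ≤ tk k := le_trans ht1 (hkmin k hkb)
          have hmono := RP.Q_monoOn (f k') (g k') (Set.mem_Ioi.2 ht0)
            (Set.mem_Ioi.2 (lt_of_lt_of_le ht0 htkk)) htkk
          have hUval : RP.Q (f k') (g k') (tk k) < m / r + ε / 2 := hkU
          have hQt : RP.Q (f k') (g k') t < m / r + ε / 2 := lt_of_le_of_lt hmono hUval
          rw [RP.Q, div_lt_iff₀ ht0] at hQt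
          have hfk : ‖f k'‖ ≤ r := f.norm_coe_le_norm k'
          nlinarith
        · have h1 : ‖f k' + t • g k'‖ ≤ ‖f k'‖ + t * ‖g k'‖ := by
            calc ‖f k' + t • g k'‖ ≤ ‖f k'‖ + ‖t • g k'‖ := norm_add_le _ _
              _ = ‖f k'‖ + t * ‖g k'‖ := by
                  rw [norm_smul, Real.norm_eq_abs, abs_of_pos ht0]
          have h2 : ‖f k'‖ ≤ r - δ := hδle k' hk'
          have h3 : t * ‖g k'‖ ≤ t * ‖g‖ :=
            mul_le_mul_of_nonneg_left (g.norm_coe_le_norm k') (le_of_lt ht0)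
          have h4 : t * B ≤ δ := by
            calc t * B ≤ t * |B| := mul_le_mul_of_nonneg_left (le_abs_self B) (le_of_lt ht0)
              _ ≤ t₂ * |B| := mul_le_mul_of_nonneg_right ht2 (abs_nonneg B)
              _ = δ * |B| / (|B| + 1) := by rw [ht₂def]; ring
              _ ≤ δ := by
                  rw [div_le_iff₀ (by positivity : (0:ℝ) < |B| + 1)]
                  nlinarith [abs_nonneg B]
          have h6 : t * ‖g‖ - δ ≤ t * (m / r + ε) := by
            have h5 : t * B = t * ‖g‖ - t * (m / r + ε) := by rw [hB]; ring
            linarith [h4, h5]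
          linarith
      have hnorm : ‖f + t • g‖ ≤ r + t * (m / r + ε) := by
        have h0 : (0:ℝ) ≤ r + t * (m / r + ε) :=
          le_trans (norm_nonneg (f kst + t • g kst)) (hpoint kst)
        rw [ContinuousMap.norm_le _ h0]
        intro k'
        rw [happ]
        exact hpoint k'
      rw [RP.Q, div_le_iff₀ ht0, ← hr]
      linarith
    filter_upwards [Ioc_mem_nhdsGT_of_mem
      (Set.mem_Ico.2 ⟨le_refl (0:ℝ), lt_min ht₁ ht₂⟩)] with t htmem
    exact hkey t htmem
  have htend : Tendsto (RP.Q f g) (𝓝[>] (0:ℝ)) (𝓝 (m / r)) := by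
    rw [tendsto_order]
    constructor
    · intro l hl
      filter_upwards [self_mem_nhdsWithin] with t ht
      exact lt_of_lt_of_le hl (hlow t ht)
    · intro u hu
      have hε : (0:ℝ) < (u - m / r) / 2 := by linarith
      filter_upwards [hup _ hε] with t htq
      linarith
  have hri : RP.ri f g = m / r := tendsto_nhds_unique (RP.tendsto_Q f g) htend
  rw [RP.rhoPlus_eq, hri, ← hr, mul_div_cancel₀ _ (ne_of_gt hf)]

end Master

theorem stmt10 {K X : Type*} [TopologicalSpace K] [CompactSpace K] [T2Space K]
    [PerfectlyNormalSpace K]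
    [NormedAddCommGroup X] [NormedSpace ℝ X] [CompleteSpace X]
    (f : C(K, X)) (hf : ‖f‖ = 1) :
    (∀ g : C(K, X), rhoPlus f g = 0 → rhoPlus g f = 0) ↔
      (∃ k₀ : K, ‖f k₀‖ = 1 ∧ (∀ k : K, k ≠ k₀ → f k = 0) ∧
        (∀ y : X, rhoPlus (f k₀) y = 0 → rhoPlus y (f k₀) = 0)) := by
  have hf0 : (0:ℝ) < ‖f‖ := by rw [hf]; norm_num
  have hK : Nonempty K := nonempty_of_norm_pos f hf0
  have hMdef : {k : K | ‖f k‖ = ‖f‖} = {k : K | ‖f k‖ = 1} := by rw [hf]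
  constructor
  · -- forward direction
    intro LS
    set M : Set K := {k : K | ‖f k‖ = 1} with hM
    have hMcl : IsClosed M := isClosed_eq f.continuous.norm continuous_const
    obtain ⟨kex, hkex⟩ := exists_norm_attain f
    rw [hf] at hkex
    have hMne : M.Nonempty := ⟨kex, hkex⟩
    -- Claim A : any point where f doesn't vanish has norm one
    have claimA : ∀ k₁ : K, f k₁ ≠ 0 → ‖f k₁‖ = 1 := by
      intro k₁ hk₁
      by_contra hne
      have hk₁M : k₁ ∉ M := hne
      obtain ⟨φ, hφ0, hφ1, hφrange⟩ := exists_continuous_zero_one_of_isClosed hMcl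
        (isClosed_singleton (x := k₁)) (Set.disjoint_singleton_right.2 hk₁M)
      set g : C(K, X) := ⟨fun k => φ k • f k, (map_continuous φ).smul (map_continuous f)⟩
        with hg
      have hgapp : ∀ k, g k = φ k • f k := fun k => rfl
      have hfg : rhoPlus f g = 0 := by
        rw [master f g hf0, hMdef]
        have himg : (fun k => rhoPlus (f k) (g k)) '' M = {0} := by
          apply Set.Subset.antisymm
          · rintro _ ⟨k, hk, rfl⟩
            show rhoPlus (f k) (g k) ∈ ({0} : Set ℝ)
            have hφk : φ k = 0 := hφ0 hk
            rw [hgapp, RP.rhoPlus_smul_self, hφk]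
            simp
          · rintro x (rfl : x = 0)
            refine ⟨kex, hkex, ?_⟩
            show rhoPlus (f kex) (g kex) = 0
            have hφk : φ kex = 0 := hφ0 hkex
            rw [hgapp, RP.rhoPlus_smul_self, hφk]
            simp
        rw [himg, csSup_singleton]
      have hgf := LS g hfg
      -- g has positive norm
      have hgk₁ : g k₁ = f k₁ := by
        have hφk : φ k₁ = 1 := hφ1 rfl
        rw [hgapp, hφk, one_smul]
      have hgpos : 0 < ‖g‖ := by
        have h1 : ‖f k₁‖ ≤ ‖g‖ := by rw [← hgk₁]; exact g.norm_coe_le_norm k₁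
        have h2 : 0 < ‖f k₁‖ := norm_pos_iff.2 hk₁
        linarith
      obtain ⟨kg, hkg⟩ := exists_norm_attain g
      have hφkg : 0 < φ kg := by
        have h1 : ‖g kg‖ = φ kg * ‖f kg‖ := by
          rw [hgapp, norm_smul, Real.norm_eq_abs, abs_of_nonneg (hφrange kg).1]
        rcases (hφrange kg).1.lt_or_eq with h | h
        · exact h
        · exfalso
          rw [← h, zero_mul] at h1
          rw [hkg] at h1
          linarith
      have hfkg : 0 < ‖f kg‖ := by
        by_contra h
        push_neg at h
        have h0 : ‖f kg‖ = 0 := le_antisymm h (norm_nonneg _)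
        have h1 : ‖g kg‖ = φ kg * ‖f kg‖ := by
          rw [hgapp, norm_smul, Real.norm_eq_abs, abs_of_nonneg (hφrange kg).1]
        rw [h0, mul_zero] at h1
        rw [hkg] at h1
        linarith
      have hterm : rhoPlus (g kg) (f kg) = φ kg * (‖f kg‖ * ‖f kg‖) := by
        rw [hgapp, RP.rhoPlus_smul_left _ _ hφkg, RP.rhoPlus_self]
      have hbdd : BddAbove ((fun k => rhoPlus (g k) (f k)) '' {k | ‖g k‖ = ‖g‖}) := by
        refine ⟨‖g‖ * ‖f‖, ?_⟩
        rintro _ ⟨k, hk, rfl⟩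
        calc rhoPlus (g k) (f k) ≤ |rhoPlus (g k) (f k)| := le_abs_self _
          _ ≤ ‖g k‖ * ‖f k‖ := RP.abs_rhoPlus_le _ _
          _ ≤ ‖g‖ * ‖f‖ := by
              apply mul_le_mul (g.norm_coe_le_norm k) (f.norm_coe_le_norm k)
                (norm_nonneg _) (norm_nonneg _)
      have hle : rhoPlus (g kg) (f kg) ≤ rhoPlus g f := by
        rw [master g f hgpos]
        exact le_csSup hbdd ⟨kg, hkg, rfl⟩
      rw [hgf, hterm] at hle
      nlinarith [mul_pos hφkg (mul_pos hfkg hfkg)]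
    -- Claim B : M is a singleton
    have claimB : ∀ k₁ k₂ : K, k₁ ∈ M → k₂ ∈ M → k₁ = k₂ := by
      intro k₁ k₂ hk₁ hk₂
      by_contra hne
      obtain ⟨φ, hφ0, hφ1, hφrange⟩ := exists_continuous_zero_one_of_isClosed
        (isClosed_singleton (x := k₁)) (isClosed_singleton (x := k₂))
        (by simpa [Set.disjoint_singleton] using hne)
      set g : C(K, X) := ⟨fun k => (-(φ k)) • f k,
        ((map_continuous φ).neg).smul (map_continuous f)⟩ with hg
      have hgapp : ∀ k, g k = (-(φ k)) • f k := fun k => rfl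
      have hterm : ∀ k, rhoPlus (f k) (g k) = -(φ k) * (‖f k‖ * ‖f k‖) := by
        intro k
        rw [hgapp, RP.rhoPlus_smul_self]
      have hfg : rhoPlus f g = 0 := by
        rw [master f g hf0, hMdef]
        apply le_antisymm
        · apply csSup_le (hMne.image _)
          rintro _ ⟨k, hk, rfl⟩
          show rhoPlus (f k) (g k) ≤ 0
          rw [hterm]
          have h1 : (0:ℝ) ≤ φ k := (hφrange k).1
          nlinarith [norm_nonneg (f k)]
        · have h0 : rhoPlus (f k₁) (g k₁) = 0 := by
            rw [hterm, hφ0 rfl]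
            simp
          have hbdd : BddAbove ((fun k => rhoPlus (f k) (g k)) '' M) := by
            refine ⟨0, ?_⟩
            rintro _ ⟨k, hk, rfl⟩
            show rhoPlus (f k) (g k) ≤ 0
            rw [hterm]
            have h1 : (0:ℝ) ≤ φ k := (hφrange k).1
            nlinarith [norm_nonneg (f k)]
          have hel : rhoPlus (f k₁) (g k₁) ≤ sSup ((fun k => rhoPlus (f k) (g k)) '' M) :=
            le_csSup hbdd ⟨k₁, hk₁, rfl⟩
          rw [h0] at hel
          exact hel
      have hgf := LS g hfg
      have hgnorm : ‖g‖ = 1 := by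
        apply le_antisymm
        · rw [ContinuousMap.norm_le _ (by norm_num : (0:ℝ) ≤ 1)]
          intro k
          rw [hgapp, norm_smul, Real.norm_eq_abs, abs_neg, abs_of_nonneg (hφrange k).1]
          calc φ k * ‖f k‖ ≤ 1 * ‖f k‖ :=
                mul_le_mul_of_nonneg_right (hφrange k).2 (norm_nonneg _)
            _ = ‖f k‖ := one_mul _
            _ ≤ 1 := by rw [← hf]; exact f.norm_coe_le_norm k
        · have : ‖g k₂‖ = 1 := by
            have hφk : φ k₂ = 1 := hφ1 rfl
            have hfk₂ : ‖f k₂‖ = 1 := hk₂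
            rw [hgapp, hφk, norm_smul]
            simp [hfk₂]
          rw [← this]
          exact g.norm_coe_le_norm k₂
      have hgpos : 0 < ‖g‖ := by rw [hgnorm]; norm_num
      have hMg : ∀ k, ‖g k‖ = ‖g‖ → rhoPlus (g k) (f k) = -1 := by
        intro k hk
        have h1 : ‖g k‖ = φ k * ‖f k‖ := by
          rw [hgapp, norm_smul, Real.norm_eq_abs, abs_neg, abs_of_nonneg (hφrange k).1]
        rw [hgnorm] at hk
        rw [h1] at hk
        have hφk : φ k = 1 := by
          have h2 := (hφrange k).2
          have h3 : ‖f k‖ ≤ 1 := by rw [← hf]; exact f.norm_coe_le_norm k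
          nlinarith [(hφrange k).1, norm_nonneg (f k)]
        have hfk : ‖f k‖ = 1 := by rw [hφk, one_mul] at hk; exact hk
        have hgk : g k = -(f k) := by
          rw [hgapp, hφk]
          simp
        rw [hgk, RP.rhoPlus_neg_self, hfk]
        norm_num
      obtain ⟨kg, hkg⟩ := exists_norm_attain g
      have himg : (fun k => rhoPlus (g k) (f k)) '' {k | ‖g k‖ = ‖g‖} = {-1} := by
        apply Set.Subset.antisymm
        · rintro _ ⟨k, hk, rfl⟩
          show rhoPlus (g k) (f k) ∈ ({-1} : Set ℝ)
          exact hMg k hk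
        · rintro x (rfl : x = -1)
          exact ⟨kg, hkg, hMg kg hkg⟩
      rw [master g f hgpos, himg, csSup_singleton] at hgf
      norm_num at hgf
    obtain ⟨k₀, hk₀⟩ := hMne
    refine ⟨k₀, hk₀, ?_, ?_⟩
    · intro k hkne
      by_contra hfk
      exact hkne (claimB k k₀ (claimA k hfk) hk₀)
    · -- Claim C : f k₀ is left symmetric in X
      intro y hy
      rcases eq_or_ne y 0 with rfl | hy0
      · exact RP.rhoPlus_zero_left _
      have hyn : 0 < ‖y‖ := norm_pos_iff.2 hy0
      -- a function peaking exactly at k₀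
      obtain ⟨ψ, hψpre, -, -, hψrange⟩ :=
        exists_continuous_one_zero_of_isCompact_of_isGδ (isCompact_singleton (x := k₀))
          (PerfectlyNormalSpace.closed_gdelta (isClosed_singleton (x := k₀)))
          isClosed_empty (Set.disjoint_empty _)
      have hψk₀ : ψ k₀ = 1 := by
        have : k₀ ∈ ψ ⁻¹' {1} := by rw [← hψpre]; exact rfl
        exact this
      set g : C(K, X) := ⟨fun k => ψ k • y, (map_continuous ψ).smul continuous_const⟩ with hg
      have hgapp : ∀ k, g k = ψ k • y := fun k => rfl
      have hgnorm : ‖g‖ = ‖y‖ := by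
        apply le_antisymm
        · rw [ContinuousMap.norm_le _ (norm_nonneg y)]
          intro k
          rw [hgapp, norm_smul, Real.norm_eq_abs, abs_of_nonneg (hψrange k).1]
          calc ψ k * ‖y‖ ≤ 1 * ‖y‖ :=
                mul_le_mul_of_nonneg_right (hψrange k).2 (norm_nonneg _)
            _ = ‖y‖ := one_mul _
        · have : ‖g k₀‖ = ‖y‖ := by rw [hgapp, hψk₀, one_smul]
          rw [← this]
          exact g.norm_coe_le_norm k₀
      have hgpos : 0 < ‖g‖ := by rw [hgnorm]; exact hyn
      -- the set M is exactly {k₀}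
      have hMsing : M = {k₀} := by
        apply Set.Subset.antisymm
        · intro k hk
          exact claimB k k₀ hk hk₀
        · rintro k (rfl : k = k₀)
          exact hk₀
      have hfg : rhoPlus f g = 0 := by
        rw [master f g hf0, hMdef, hMsing, Set.image_singleton, csSup_singleton]
        have : g k₀ = y := by rw [hgapp, hψk₀, one_smul]
        rw [this]
        exact hy
      have hgf := LS g hfg
      have hMgsing : {k | ‖g k‖ = ‖g‖} = {k₀} := by
        apply Set.Subset.antisymm
        · intro k hk
          have h1 : ‖g k‖ = ψ k * ‖y‖ := by
            rw [hgapp, norm_smul, Real.norm_eq_abs, abs_of_nonneg (hψrange k).1]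
          have hk' : ‖g k‖ = ‖g‖ := hk
          have h2 : ψ k * ‖y‖ = ‖y‖ := by rw [← h1, hk', hgnorm]
          have hψk : ψ k = 1 := by
            have h3 : ψ k * ‖y‖ = 1 * ‖y‖ := by rw [h2, one_mul]
            exact mul_right_cancel₀ (ne_of_gt hyn) h3
          have : k ∈ ψ ⁻¹' {1} := hψk
          rw [← hψpre] at this
          exact this
        · rintro k (rfl : k = k₀)
          show ‖g k‖ = ‖g‖
          rw [hgapp, hψk₀, one_smul, hgnorm]
      rw [master g f hgpos, hMgsing, Set.image_singleton, csSup_singleton] at hgf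
      have : g k₀ = y := by rw [hgapp, hψk₀, one_smul]
      rw [this] at hgf
      exact hgf
  · -- reverse direction
    rintro ⟨k₀, hk₀1, hk₀0, hLS⟩ g hfg
    have hMsing : {k : K | ‖f k‖ = ‖f‖} = {k₀} := by
      rw [hf]
      apply Set.Subset.antisymm
      · intro k hk
        by_contra hne
        have hk' : ‖f k‖ = 1 := hk
        rw [hk₀0 k hne] at hk'
        simp at hk'
      · rintro k (rfl : k = k₀)
        exact hk₀1
    rw [master f g hf0, hMsing, Set.image_singleton, csSup_singleton] at hfg
    have h1 : rhoPlus (g k₀) (f k₀) = 0 := hLS _ hfg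
    rcases eq_or_lt_of_le (norm_nonneg g) with hg0 | hgpos
    · exact RP.rhoPlus_zero_left' hg0.symm f
    rw [master g f hgpos]
    obtain ⟨kg, hkg⟩ := exists_norm_attain g
    have himg : (fun k => rhoPlus (g k) (f k)) '' {k | ‖g k‖ = ‖g‖} = {0} := by
      apply Set.Subset.antisymm
      · rintro _ ⟨k, hk, rfl⟩
        show rhoPlus (g k) (f k) ∈ ({0} : Set ℝ)
        rcases eq_or_ne k k₀ with rfl | hne
        · exact h1
        · rw [hk₀0 k hne, RP.rhoPlus_zero_right]
          rfl
      · rintro x (rfl : x = 0)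
        refine ⟨kg, hkg, ?_⟩
        show rhoPlus (g kg) (f kg) = 0
        rcases eq_or_ne kg k₀ with rfl | hne
        · exact h1
        · rw [hk₀0 kg hne, RP.rhoPlus_zero_right]
    rw [himg, csSup_singleton]
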